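/- Let k ≥ 1 be an integer and, for each integer j ≥ 1, let A_j = (2/π) ∫_0^π (cos η)^k cos(jη) dη denote the j-th cosine Fourier coefficient of the function η ↦ (cos η)^k on [0,π]. Then ∑_{j=1}^{k} j · A_j² = (k / 4^{k-1}) · C(k-1, ⌊(k-1)/2⌋)². -/

import Mathlib

open Finset intervalIntegral

lemma two_cos_pow (k : ℕ) (z : ℂ) :
    (2 * Complex.cos z) ^ k
      = ∑ m ∈ Finset.range (k+1), (k.choose m : ℂ) *
          Complex.cos ((((k:ℤ) - 2*(m:ℤ)) : ℂ) * z) := by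
  have h1 : (2 * Complex.cos z) ^ k
      = ∑ m ∈ Finset.range (k+1), (k.choose m : ℂ) *
          Complex.exp (((2*(m:ℤ) - (k:ℤ)) : ℂ) * z * Complex.I) := by
    rw [Complex.two_cos, add_pow]
    refine Finset.sum_congr rfl fun m hm => ?_
    have hmk : m ≤ k := Nat.lt_succ_iff.mp (Finset.mem_range.mp hm)
    rw [← Complex.exp_nat_mul, ← Complex.exp_nat_mul, ← Complex.exp_add]
    have : ((m:ℂ)) * (z * Complex.I) + ((k - m : ℕ):ℂ) * (-z * Complex.I)
        = ((2*(m:ℤ) - (k:ℤ)) : ℂ) * z * Complex.I := by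
      push_cast [hmk]
      ring
    rw [this]
    ring
  have h2 : (2:ℂ) * ∑ m ∈ Finset.range (k+1), (k.choose m : ℂ) *
          Complex.exp (((2*(m:ℤ) - (k:ℤ)) : ℂ) * z * Complex.I)
      = 2 * ∑ m ∈ Finset.range (k+1), (k.choose m : ℂ) *
          Complex.cos ((((k:ℤ) - 2*(m:ℤ)) : ℂ) * z) := by
    have hrefl := Finset.sum_range_reflect
      (fun m => (k.choose m : ℂ) * Complex.exp (((2*(m:ℤ) - (k:ℤ)) : ℂ) * z * Complex.I)) (k+1)
    have hrefl' : ∑ m ∈ Finset.range (k+1), (k.choose m : ℂ) *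
          Complex.exp (((2*(m:ℤ) - (k:ℤ)) : ℂ) * z * Complex.I)
        = ∑ m ∈ Finset.range (k+1), (k.choose m : ℂ) *
          Complex.exp ((((k:ℤ) - 2*(m:ℤ)) : ℂ) * z * Complex.I) := by
      rw [← hrefl]
      refine Finset.sum_congr rfl fun m hm => ?_
      have hmk : m ≤ k := Nat.lt_succ_iff.mp (Finset.mem_range.mp hm)
      have e1 : k + 1 - 1 - m = k - m := by omega
      rw [e1, Nat.choose_symm hmk]
      congr 2
      push_cast [hmk]
      ring
    calc (2:ℂ) * ∑ m ∈ Finset.range (k+1), (k.choose m : ℂ) *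
          Complex.exp (((2*(m:ℤ) - (k:ℤ)) : ℂ) * z * Complex.I)
        = (∑ m ∈ Finset.range (k+1), (k.choose m : ℂ) *
          Complex.exp (((2*(m:ℤ) - (k:ℤ)) : ℂ) * z * Complex.I))
          + ∑ m ∈ Finset.range (k+1), (k.choose m : ℂ) *
          Complex.exp ((((k:ℤ) - 2*(m:ℤ)) : ℂ) * z * Complex.I) := by
          rw [← hrefl']; ring
      _ = ∑ m ∈ Finset.range (k+1), (k.choose m : ℂ) *
          (Complex.exp (((2*(m:ℤ) - (k:ℤ)) : ℂ) * z * Complex.I)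
            + Complex.exp ((((k:ℤ) - 2*(m:ℤ)) : ℂ) * z * Complex.I)) := by
          rw [← Finset.sum_add_distrib]; refine Finset.sum_congr rfl fun m _ => ?_; ring
      _ = 2 * ∑ m ∈ Finset.range (k+1), (k.choose m : ℂ) *
          Complex.cos ((((k:ℤ) - 2*(m:ℤ)) : ℂ) * z) := by
          rw [Finset.mul_sum]
          refine Finset.sum_congr rfl fun m _ => ?_
          have := Complex.two_cos ((((k:ℤ) - 2*(m:ℤ)) : ℂ) * z)
          have e2 : ((2*(m:ℤ) - (k:ℤ)) : ℂ) * z * Complex.I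
              = -(((((k:ℤ) - 2*(m:ℤ)) : ℂ) * z)) * Complex.I := by push_cast; ring
          rw [e2]
          linear_combination (-(k.choose m : ℂ)) * this
  exact mul_left_cancel₀ (two_ne_zero' ℂ) (h1 ▸ h2)

lemma real_cos_pow (k : ℕ) (x : ℝ) :
    Real.cos x ^ k = (1/2^k) * ∑ m ∈ Finset.range (k+1), (k.choose m : ℝ) *
          Real.cos (((((k:ℤ) - 2*(m:ℤ)) : ℤ) : ℝ) * x) := by
  have h := two_cos_pow k (x : ℂ)
  have h2 : ((2 * Real.cos x) ^ k : ℝ) = ((∑ m ∈ Finset.range (k+1), (k.choose m : ℝ) *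
          Real.cos (((((k:ℤ) - 2*(m:ℤ)) : ℤ) : ℝ) * x)) : ℝ) := by
    apply Complex.ofReal_injective
    push_cast
    rw [h]
    refine Finset.sum_congr rfl fun m _ => ?_
    norm_num
  have h3 : (2:ℝ)^k * Real.cos x ^ k = ∑ m ∈ Finset.range (k+1), (k.choose m : ℝ) *
          Real.cos (((((k:ℤ) - 2*(m:ℤ)) : ℤ) : ℝ) * x) := by
    rw [← h2]; ring
  rw [← h3]
  field_simp

lemma integral_cos_int_mul (n : ℤ) :
    ∫ x in (0:ℝ)..Real.pi, Real.cos ((n:ℝ) * x) = if n = 0 then Real.pi else 0 := by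
  split_ifs with h
  · simp [h, Real.pi_pos.le]
  · have hc : (n:ℝ) ≠ 0 := Int.cast_ne_zero.mpr h
    rw [intervalIntegral.integral_comp_mul_left Real.cos hc]
    simp [Real.sin_int_mul_pi]

lemma cont_cc (a b : ℝ) : Continuous (fun x : ℝ => Real.cos (a * x) * Real.cos (b * x)) := by
  fun_prop

lemma integral_cos_mul_cos' (n : ℤ) (j : ℕ) (hj : 1 ≤ j) :
    ∫ x in (0:ℝ)..Real.pi, Real.cos ((n:ℝ) * x) * Real.cos ((j:ℝ) * x)
      = if n.natAbs = j then Real.pi / 2 else 0 := by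
  have hrw : ∀ x : ℝ, Real.cos ((n:ℝ)*x) * Real.cos ((j:ℝ)*x)
      = (Real.cos (((n + j : ℤ):ℝ) * x) + Real.cos (((n - j : ℤ):ℝ) * x)) / 2 := by
    intro x
    have e1 : ((n + j : ℤ):ℝ) * x = (n:ℝ)*x + (j:ℝ)*x := by push_cast; ring
    have e2 : ((n - j : ℤ):ℝ) * x = (n:ℝ)*x - (j:ℝ)*x := by push_cast; ring
    rw [e1, e2, Real.cos_add, Real.cos_sub]
    ring
  simp_rw [hrw]
  have hint : ∀ c : ℤ, IntervalIntegrable (fun x : ℝ => Real.cos ((c:ℝ) * x))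
      MeasureTheory.volume 0 Real.pi := fun c =>
    (Real.continuous_cos.comp (continuous_const.mul continuous_id)).intervalIntegrable 0 Real.pi
  rw [intervalIntegral.integral_div, intervalIntegral.integral_add (hint _) (hint _),
    integral_cos_int_mul, integral_cos_int_mul]
  have hpi := Real.pi_ne_zero
  split_ifs <;> first | (exfalso; omega) | ring

lemma integral_cos_pow_mul_cos (k j : ℕ) (hj : 1 ≤ j) :
    ∫ x in (0:ℝ)..Real.pi, Real.cos x ^ k * Real.cos ((j:ℝ) * x)
      = (Real.pi/2) * (1/2^k) *
        ∑ m ∈ Finset.range (k+1),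
          (if ((k:ℤ) - 2*(m:ℤ)).natAbs = j then (k.choose m : ℝ) else 0) := by
  have hrw : ∀ x : ℝ, Real.cos x ^ k * Real.cos ((j:ℝ) * x)
      = ∑ m ∈ Finset.range (k+1), (1/2^k) * (k.choose m : ℝ) *
          (Real.cos (((((k:ℤ) - 2*(m:ℤ)) : ℤ) : ℝ) * x) * Real.cos ((j:ℝ) * x)) := by
    intro x
    rw [real_cos_pow k x, Finset.mul_sum, Finset.sum_mul]
    refine Finset.sum_congr rfl fun m _ => ?_
    ring
  simp_rw [hrw]
  rw [intervalIntegral.integral_finset_sum]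
  · rw [Finset.mul_sum]
    refine Finset.sum_congr rfl fun m _ => ?_
    rw [intervalIntegral.integral_const_mul, integral_cos_mul_cos' _ j hj]
    split_ifs <;> ring
  · intro m _
    exact ((continuous_const.mul (cont_cc _ _))).intervalIntegrable 0 Real.pi

lemma key_id (k s : ℕ) (hs1 : 1 ≤ s) (hsk : s ≤ k) :
    ((k:ℝ) - 2*s) * (k.choose s : ℝ)^2
      = k * (((k-1).choose s : ℝ)^2 - ((k-1).choose (s-1) : ℝ)^2) := by
  rcases eq_or_lt_of_le hsk with rfl | hlt
  · have h1 : (s-1).choose s = 0 := Nat.choose_eq_zero_of_lt (by omega)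
    have h2 : (s-1).choose (s-1) = 1 := Nat.choose_self _
    rw [h1, h2, Nat.choose_self]
    push_cast
    ring
  · have hk1 : 1 ≤ k := le_trans hs1 hsk
    have h1 : k * (k-1).choose (s-1) = k.choose s * s := by
      have := Nat.add_one_mul_choose_eq (k-1) (s-1)
      have e1 : k - 1 + 1 = k := by omega
      have e2 : s - 1 + 1 = s := by omega
      rwa [e1, e2] at this
    have h2 : k * (k-1).choose s = k.choose s * (k - s) := by
      have := Nat.add_one_mul_choose_eq (k-1) (k-s-1)
      have e1 : k - 1 + 1 = k := by omega
      have e2 : k - s - 1 + 1 = k - s := by omega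
      rw [e1, e2] at this
      have e3 : (k-1).choose (k-s-1) = (k-1).choose s := by
        rw [← Nat.choose_symm (show s ≤ k - 1 by omega)]
        congr 1
        omega
      have e4 : k.choose (k-s) = k.choose s := Nat.choose_symm hsk
      rw [e3, e4] at this
      exact this
    have hk0 : (k:ℝ) ≠ 0 := Nat.cast_ne_zero.mpr (by omega)
    have h1' : (k:ℝ) * ((k-1).choose (s-1) : ℝ) = (k.choose s : ℝ) * s := by
      exact_mod_cast congrArg (Nat.cast : ℕ → ℝ) h1
    have h2' : (k:ℝ) * ((k-1).choose s : ℝ) = (k.choose s : ℝ) * ((k:ℝ) - s) := by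
      have := congrArg (Nat.cast : ℕ → ℝ) h2
      push_cast [Nat.cast_sub hsk] at this
      exact_mod_cast this
    have hb1 : ((k-1).choose s : ℝ) = (k.choose s : ℝ) * ((k:ℝ) - s) / k := by
      rw [eq_div_iff hk0]; linarith [h2']
    have hb0 : ((k-1).choose (s-1) : ℝ) = (k.choose s : ℝ) * s / k := by
      rw [eq_div_iff hk0]; linarith [h1']
    rw [hb1, hb0]
    field_simp
    ring

lemma tele (k : ℕ) (hk : 1 ≤ k) :
    ∑ m ∈ Finset.range ((k-1)/2 + 1), ((k:ℝ) - 2*m) * (k.choose m : ℝ)^2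
      = k * ((k-1).choose ((k-1)/2) : ℝ)^2 := by
  set M := (k-1)/2 with hM
  rw [Finset.sum_range_succ']
  have hstep : ∀ m ∈ Finset.range M,
      ((k:ℝ) - 2*(m+1:ℕ)) * (k.choose (m+1) : ℝ)^2
        = (k:ℝ) * ((k-1).choose (m+1):ℝ)^2 - (k:ℝ) * ((k-1).choose m:ℝ)^2 := by
    intro m hm
    have hmM : m < M := Finset.mem_range.mp hm
    have := key_id k (m+1) (by omega) (by omega)
    rw [this]
    have : (m + 1) - 1 = m := by omega
    rw [this]
    ring
  rw [Finset.sum_congr rfl hstep, Finset.sum_sub_distrib]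
  have htel := Finset.sum_range_sub (fun m => (k:ℝ) * ((k-1).choose m:ℝ)^2) M
  rw [show (∑ m ∈ Finset.range M, (k:ℝ) * ((k-1).choose (m+1):ℝ)^2)
      - (∑ m ∈ Finset.range M, (k:ℝ) * ((k-1).choose m:ℝ)^2)
      = (k:ℝ) * ((k-1).choose M:ℝ)^2 - (k:ℝ) * ((k-1).choose 0:ℝ)^2 by
        rw [← Finset.sum_sub_distrib]; exact htel]
  simp [Nat.choose_zero_right]

lemma sum_if_pair (k j m₀ : ℕ) (hj : 1 ≤ j) (hjm : j + 2*m₀ = k) :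
    ∑ m ∈ Finset.range (k+1),
        (if ((k:ℤ) - 2*(m:ℤ)).natAbs = j then (k.choose m : ℝ) else 0)
      = 2 * (k.choose m₀ : ℝ) := by
  rw [← Finset.sum_filter]
  have hfil : (Finset.range (k+1)).filter (fun m : ℕ => ((k:ℤ) - 2*(m:ℤ)).natAbs = j)
      = {m₀, k - m₀} := by
    ext a
    simp only [Finset.mem_filter, Finset.mem_range, Finset.mem_insert, Finset.mem_singleton,
      Int.natAbs_eq_iff]
    omega
  rw [hfil, Finset.sum_pair (show m₀ ≠ k - m₀ by omega)]
  rw [Nat.choose_symm (show m₀ ≤ k by omega)]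
  ring

lemma sum_if_zero (k j : ℕ) (hpar : (k + j) % 2 = 1) :
    ∑ m ∈ Finset.range (k+1),
        (if ((k:ℤ) - 2*(m:ℤ)).natAbs = j then (k.choose m : ℝ) else 0) = 0 := by
  apply Finset.sum_eq_zero
  intro m _
  rw [if_neg]
  rw [Int.natAbs_eq_iff]
  omega


/-- Let `k ≥ 1` and let `A j = (2/π) ∫_0^π (cos η)^k cos(jη) dη` be the `j`-th cosine
Fourier coefficient of `η ↦ (cos η)^k` on `[0,π]`. Then
`∑_{j=1}^{k} j·A_j² = (k / 4^{k-1}) · C(k-1, ⌊(k-1)/2⌋)²`. -/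
theorem sum_fourier_coeff_cos_pow (k : ℕ) (hk : 1 ≤ k) (A : ℕ → ℝ)
    (hA : ∀ j : ℕ,
      A j = (2 / Real.pi) * ∫ η in (0:ℝ)..Real.pi, (Real.cos η) ^ k * Real.cos (j * η)) :
    ∑ j ∈ Finset.Icc 1 k, (j : ℝ) * (A j) ^ 2
      = ((k : ℝ) / 4 ^ (k - 1)) * (Nat.choose (k - 1) ((k - 1) / 2) : ℝ) ^ 2 := by
  have hpi : Real.pi ≠ 0 := Real.pi_ne_zero
  set M := (k-1)/2 with hM
  -- value of A at j with j + 2m = k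
  have hAval : ∀ m₀ j : ℕ, 1 ≤ j → j + 2*m₀ = k → A j = 2 * (k.choose m₀ : ℝ) / 2^k := by
    intro m₀ j hj hjm
    rw [hA j, integral_cos_pow_mul_cos k j hj, sum_if_pair k j m₀ hj hjm]
    field_simp
  have hAzero : ∀ j : ℕ, 1 ≤ j → (k + j) % 2 = 1 → A j = 0 := by
    intro j hj hpar
    rw [hA j, integral_cos_pow_mul_cos k j hj, sum_if_zero k j hpar]
    ring
  -- restrict sum to image
  have hsub : (Finset.range (M+1)).image (fun m => k - 2*m) ⊆ Finset.Icc 1 k := by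
    intro j hj
    simp only [Finset.mem_image, Finset.mem_range] at hj
    obtain ⟨m, hm, rfl⟩ := hj
    simp only [Finset.mem_Icc]
    omega
  rw [← Finset.sum_subset hsub]
  · have hinj : ∀ a ∈ Finset.range (M+1), ∀ b ∈ Finset.range (M+1),
        k - 2*a = k - 2*b → a = b := by
      intro a ha b hb hab
      simp only [Finset.mem_range] at ha hb
      omega
    rw [Finset.sum_image hinj]
    have hterm : ∀ m ∈ Finset.range (M+1),
        ((k - 2*m : ℕ) : ℝ) * (A (k - 2*m))^2
          = (1/4^(k-1)) * (((k:ℝ) - 2*m) * (k.choose m : ℝ)^2) := by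
      intro m hm
      simp only [Finset.mem_range] at hm
      have h1 : 1 ≤ k - 2*m := by omega
      have h2 : (k - 2*m) + 2*m = k := by omega
      rw [hAval m (k - 2*m) h1 h2]
      have hc : ((k - 2*m : ℕ) : ℝ) = (k:ℝ) - 2*m := by
        push_cast [show 2*m ≤ k by omega]; ring
      rw [hc]
      rw [div_pow]
      have h4 : ((2:ℝ)^k)^2 = 4^(k-1) * 4 := by
        rw [show (4:ℝ) = 2^2 by norm_num, ← pow_mul, ← pow_mul, ← pow_add]
        congr 1
        omega
      rw [mul_pow, h4]
      field_simp
      ring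
    rw [Finset.sum_congr rfl hterm, ← Finset.mul_sum, tele k hk]
    field_simp
    rfl
  · intro j hj hnotim
    simp only [Finset.mem_Icc] at hj
    have hpar : (k + j) % 2 = 1 := by
      by_contra hpar
      apply hnotim
      simp only [Finset.mem_image, Finset.mem_range]
      exact ⟨(k - j)/2, by omega, by omega⟩
    rw [hAzero j hj.1 hpar]
    ring
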